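/- (Realizability of spherical triangles) Let α, β, γ ∈ (0,π) be such that 1 - cos²α - cos²β - cos²γ - 2·cosα·cosβ·cosγ > 0. Then there exists a spherical triangle (x,y,z) whose angles at the vertices x, y, z are α, β, γ respectively. -/

import Mathlib

/-- ℝ³ with the Euclidean inner product. -/
noncomputable abbrev E3 := EuclideanSpace ℝ (Fin 3)

/-- The unit tangent vector at `x` in the direction of `y`:
`x_y = (y - ⟨x,y⟩x)/‖y - ⟨x,y⟩x‖`. -/
noncomputable def sideUnit (x y : E3) : E3 :=
  ‖y - (inner ℝ x y : ℝ) • x‖⁻¹ • (y - (inner ℝ x y : ℝ) • x)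

/-- The angle of the spherical triangle `(x,y,z)` at the vertex `x`. -/
noncomputable def vertexAngle (x y z : E3) : ℝ :=
  Real.arccos (inner ℝ (sideUnit x y) (sideUnit x z) : ℝ)

lemma norm_sub_proj (x y : E3) (hx : ‖x‖ = 1) (hy : ‖y‖ = 1) :
    ‖y - (inner ℝ x y : ℝ) • x‖ = Real.sqrt (1 - (inner ℝ x y : ℝ)^2) := by
  rw [← Real.sqrt_sq (norm_nonneg _)]
  congr 1
  rw [norm_sub_sq_real]
  simp only [real_inner_smul_right, norm_smul, real_inner_comm y x, hx, hy,
    Real.norm_eq_abs, mul_one, one_pow, mul_pow, sq_abs]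
  ring

lemma inner_proj (x y z : E3) (hx : ‖x‖ = 1) :
    (inner ℝ (y - (inner ℝ x y : ℝ) • x) (z - (inner ℝ x z : ℝ) • x) : ℝ)
      = (inner ℝ y z : ℝ) - (inner ℝ x y : ℝ) * (inner ℝ x z : ℝ) := by
  simp only [inner_sub_left, inner_sub_right, real_inner_smul_left, real_inner_smul_right,
    real_inner_self_eq_norm_sq, hx, real_inner_comm y x, one_pow, mul_one]
  ring

lemma vertexAngle_eq (x y z : E3) (hx : ‖x‖ = 1) (hy : ‖y‖ = 1) (hz : ‖z‖ = 1) :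
    vertexAngle x y z = Real.arccos
      (((inner ℝ y z : ℝ) - (inner ℝ x y : ℝ) * (inner ℝ x z : ℝ)) /
        (Real.sqrt (1 - (inner ℝ x y : ℝ)^2) * Real.sqrt (1 - (inner ℝ x z : ℝ)^2))) := by
  unfold vertexAngle sideUnit
  rw [real_inner_smul_left, real_inner_smul_right, inner_proj x y z hx,
    norm_sub_proj x y hx hy, norm_sub_proj x z hx hz]
  congr 1
  ring


set_option maxHeartbeats 1600000 in
/-- realizability of spherical triangles. If `α, β, γ ∈ (0,π)` satisfy
`1 - cos²α - cos²β - cos²γ - 2cosα·cosβ·cosγ > 0`, then there is a spherical triangle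
with angles `α, β, γ` at its vertices. -/
theorem spherical_triangle_realizable (α β γ : ℝ)
    (hα : α ∈ Set.Ioo 0 Real.pi) (hβ : β ∈ Set.Ioo 0 Real.pi)
    (hγ : γ ∈ Set.Ioo 0 Real.pi)
    (hD : 0 < 1 - Real.cos α ^ 2 - Real.cos β ^ 2 - Real.cos γ ^ 2 -
      2 * Real.cos α * Real.cos β * Real.cos γ) :
    ∃ x y z : E3, ‖x‖ = 1 ∧ ‖y‖ = 1 ∧ ‖z‖ = 1 ∧
      LinearIndependent ℝ ![x, y, z] ∧
      vertexAngle x y z = α ∧ vertexAngle y z x = β ∧ vertexAngle z x y = γ := by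
  obtain ⟨hα0, hα1⟩ := hα
  obtain ⟨hβ0, hβ1⟩ := hβ
  obtain ⟨hγ0, hγ1⟩ := hγ
  set ca := Real.cos α with hca
  set cb := Real.cos β with hcb
  set cg := Real.cos γ with hcg
  set sa := Real.sin α with hsa'
  set sb := Real.sin β with hsb'
  set sg := Real.sin γ with hsg'
  have hsa : 0 < sa := Real.sin_pos_of_pos_of_lt_pi hα0 hα1
  have hsb : 0 < sb := Real.sin_pos_of_pos_of_lt_pi hβ0 hβ1
  have hsg : 0 < sg := Real.sin_pos_of_pos_of_lt_pi hγ0 hγ1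
  have hsa2 : sa^2 = 1 - ca^2 := Real.sin_sq α
  have hsb2 : sb^2 = 1 - cb^2 := Real.sin_sq β
  have hsg2 : sg^2 = 1 - cg^2 := Real.sin_sq γ
  set D := 1 - ca^2 - cb^2 - cg^2 - 2*ca*cb*cg with hDdef
  have hDpos : 0 < D := by rw [hDdef]; linarith [hD]
  set sD := Real.sqrt D with hsDdef
  have hsD : 0 < sD := Real.sqrt_pos.2 hDpos
  have hsD2 : sD^2 = D := Real.sq_sqrt hDpos.le
  set r := (cg + ca*cb)/(sa*sb) with hrdef
  set q := (cb + ca*cg)/(sa*sg) with hqdef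
  set p := (ca + cb*cg)/(sb*sg) with hpdef
  set s := sD/(sa*sb) with hsdef
  set t := sD/(sa*sg) with htdef
  set u := sD/(sb*sg) with hudef
  have hs : 0 < s := by positivity
  have ht : 0 < t := by positivity
  have hu : 0 < u := by positivity
  -- unit relations
  have hE1 : r^2 + s^2 = 1 := by
    rw [hrdef, hsdef, div_pow, div_pow, ← add_div,
      div_eq_one_iff_eq (by positivity), hsD2, hDdef, mul_pow, hsa2, hsb2]
    ring
  have hE2 : q^2 + t^2 = 1 := by
    rw [hqdef, htdef, div_pow, div_pow, ← add_div,
      div_eq_one_iff_eq (by positivity), hsD2, hDdef, mul_pow, hsa2, hsg2]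
    ring
  have hE3 : p^2 + u^2 = 1 := by
    rw [hpdef, hudef, div_pow, div_pow, ← add_div,
      div_eq_one_iff_eq (by positivity), hsD2, hDdef, mul_pow, hsb2, hsg2]
    ring
  -- key identities
  have hsD2' : sD^2 = 1 - ca^2 - cb^2 - cg^2 - 2*ca*cb*cg := by rw [hsD2]
  have hk1 : p - r*q = s*t*ca := by
    rw [hpdef, hrdef, hqdef, hsdef, htdef]
    field_simp
    linear_combination (ca+cb*cg)*hsa2 - ca*hsD2'
  have hk2 : q - p*r = u*s*cb := by
    rw [hpdef, hrdef, hqdef, hsdef, hudef]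
    field_simp
    linear_combination (cb+ca*cg)*hsb2 - cb*hsD2'
  have hk3 : r - q*p = t*u*cg := by
    rw [hpdef, hrdef, hqdef, htdef, hudef]
    field_simp
    linear_combination (cg+ca*cb)*hsg2 - cg*hsD2'
  -- the vectors
  set x : E3 := (WithLp.equiv 2 (Fin 3 → ℝ)).symm ![1, 0, 0] with hxdef
  set y : E3 := (WithLp.equiv 2 (Fin 3 → ℝ)).symm ![r, s, 0] with hydef
  set z : E3 := (WithLp.equiv 2 (Fin 3 → ℝ)).symm ![q, t*ca, t*sa] with hzdef
  have norm_of_sq : ∀ (v : E3), ‖v‖^2 = 1 → ‖v‖ = 1 := by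
    intro v hv
    rw [← Real.sqrt_sq (norm_nonneg v), hv, Real.sqrt_one]
  have hnx : ‖x‖ = 1 := by
    apply norm_of_sq
    rw [← real_inner_self_eq_norm_sq]
    simp only [hxdef, PiLp.inner_apply, RCLike.inner_apply, starRingEnd_apply, star_trivial,
      Fin.sum_univ_three, WithLp.equiv_symm_apply, PiLp.toLp_apply, Matrix.cons_val_zero, Matrix.cons_val_one,
      Matrix.head_cons, Matrix.cons_val_two, Matrix.tail_cons]
    norm_num
  have hny : ‖y‖ = 1 := by
    apply norm_of_sq
    rw [← real_inner_self_eq_norm_sq]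
    simp only [hydef, PiLp.inner_apply, RCLike.inner_apply, starRingEnd_apply, star_trivial,
      Fin.sum_univ_three, WithLp.equiv_symm_apply, PiLp.toLp_apply, Matrix.cons_val_zero, Matrix.cons_val_one,
      Matrix.head_cons, Matrix.cons_val_two, Matrix.tail_cons]
    linear_combination hE1
  have hnz : ‖z‖ = 1 := by
    apply norm_of_sq
    rw [← real_inner_self_eq_norm_sq]
    simp only [hzdef, PiLp.inner_apply, RCLike.inner_apply, starRingEnd_apply, star_trivial,
      Fin.sum_univ_three, WithLp.equiv_symm_apply, PiLp.toLp_apply, Matrix.cons_val_zero, Matrix.cons_val_one,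
      Matrix.head_cons, Matrix.cons_val_two, Matrix.tail_cons]
    linear_combination hE2 + t^2*hsa2
  -- inner products
  have hxy : (inner ℝ x y : ℝ) = r := by
    simp [hxdef, hydef, PiLp.inner_apply, Fin.sum_univ_three, WithLp.equiv_symm_apply, PiLp.toLp_apply]
  have hxz : (inner ℝ x z : ℝ) = q := by
    simp [hxdef, hzdef, PiLp.inner_apply, Fin.sum_univ_three, WithLp.equiv_symm_apply, PiLp.toLp_apply]
  have hyz : (inner ℝ y z : ℝ) = p := by
    have : (inner ℝ y z : ℝ) = r*q + s*t*ca := by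
      simp only [hydef, hzdef, PiLp.inner_apply, RCLike.inner_apply, starRingEnd_apply,
        star_trivial, Fin.sum_univ_three, WithLp.equiv_symm_apply, PiLp.toLp_apply, Matrix.cons_val_zero,
        Matrix.cons_val_one, Matrix.head_cons, Matrix.cons_val_two, Matrix.tail_cons]
      ring
    rw [this]; linear_combination -hk1
  have hyx : (inner ℝ y x : ℝ) = r := by rw [real_inner_comm]; exact hxy
  have hzx : (inner ℝ z x : ℝ) = q := by rw [real_inner_comm]; exact hxz
  have hzy : (inner ℝ z y : ℝ) = p := by rw [real_inner_comm]; exact hyz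
  -- sqrt simplifications
  have hsr : Real.sqrt (1 - r^2) = s := by
    rw [show (1 : ℝ) - r^2 = s^2 by linarith, Real.sqrt_sq hs.le]
  have hsq : Real.sqrt (1 - q^2) = t := by
    rw [show (1 : ℝ) - q^2 = t^2 by linarith, Real.sqrt_sq ht.le]
  have hsp : Real.sqrt (1 - p^2) = u := by
    rw [show (1 : ℝ) - p^2 = u^2 by linarith, Real.sqrt_sq hu.le]
  refine ⟨x, y, z, hnx, hny, hnz, ?_, ?_, ?_, ?_⟩
  · -- linear independence
    rw [Fintype.linearIndependent_iff]
    intro g hg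
    have happ : ∀ j : Fin 3, (g 0 • x + g 1 • y + g 2 • z) j = 0 := by
      intro j
      have : (∑ i, g i • ![x, y, z] i) = g 0 • x + g 1 • y + g 2 • z := by
        simp [Fin.sum_univ_three]
      rw [this] at hg
      rw [hg]; rfl
    have h2 := happ 2
    have h1 := happ 1
    have h0 := happ 0
    simp only [hxdef, hydef, hzdef, PiLp.add_apply, PiLp.smul_apply,
      WithLp.equiv_symm_apply, PiLp.toLp_apply, Matrix.cons_val_zero, Matrix.cons_val_one, Matrix.head_cons,
      Matrix.cons_val_two, Matrix.tail_cons, smul_eq_mul] at h0 h1 h2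
    have hg2 : g 2 = 0 := by
      have hne : t * sa ≠ 0 := by positivity
      have h : g 2 * (t * sa) = 0 := by linear_combination h2
      exact (mul_eq_zero.mp h).resolve_right hne
    have hg1 : g 1 = 0 := by
      rw [hg2] at h1
      have h : g 1 * s = 0 := by linear_combination h1
      exact (mul_eq_zero.mp h).resolve_right (ne_of_gt hs)
    have hg0 : g 0 = 0 := by
      rw [hg1, hg2] at h0
      linear_combination h0
    intro i
    fin_cases i <;> assumption
  · rw [vertexAngle_eq x y z hnx hny hnz, hxy, hxz, hyz, hsr, hsq, hk1,
      show s*t*ca/(s*t) = ca by field_simp]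
    exact Real.arccos_cos hα0.le hα1.le
  · rw [vertexAngle_eq y z x hny hnz hnx, hyz, hyx, hzx, hsp, hsr]
    rw [show q - p*r = cb * (u*s) by linarith [hk2],
      show cb*(u*s)/(u*s) = cb by field_simp]
    exact Real.arccos_cos hβ0.le hβ1.le
  · rw [vertexAngle_eq z x y hnz hnx hny, hzx, hzy, hxy, hsq, hsp]
    rw [show r - q*p = cg * (t*u) by linarith [hk3],
      show cg*(t*u)/(t*u) = cg by field_simp]
    exact Real.arccos_cos hγ0.le hγ1.le
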